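/- In End(C^{1|1})^{⊗3}, the permutation-type operators P^{ij}, Q^{ij} (acting in tensor factors i,j) satisfy: P^{12}P^{13} = P^{23}P^{12} = P^{13}P^{23}, P^{12}Q^{13} = Q^{23}P^{12} = Q^{13}Q^{23}, Q^{12}Q^{13} = -P^{23}Q^{12} = -Q^{13}P^{23}, and Q^{12}P^{13} = -Q^{23}Q^{12} = -P^{13}Q^{23}. -/

import Mathlib

/-- Index set `{1,-1}` of `C^{1|1}`: `inl 0 = 1`, `inr 0 = -1`. -/
abbrev I1 := Fin 1 ⊕ Fin 1

def I1.neg : I1 → I1 := Sum.swap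

def I1.par : I1 → ZMod 2
  | Sum.inl _ => 0
  | Sum.inr _ => 1

/-- Matrix unit `ε_{ij}` of `End(C^{1|1})`. -/
noncomputable def eps (i j : I1) : Matrix I1 I1 ℂ := Matrix.single i j 1

/-- Super (Koszul-signed) tensor product `a ⊗ b ⊗ c` of three elements of `End(C^{1|1})`,
realized as the operator on `(C^{1|1})^{⊗3}`:
`(a⊗b⊗c)(v₁⊗v₂⊗v₃) = (-1)^{(|b|+|c|)|v₁| + |c||v₂|} a v₁ ⊗ b v₂ ⊗ c v₃`.
This realization is an isomorphism of the super tensor product algebra `End(C^{1|1})^{⊗3}`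
onto `End((C^{1|1})^{⊗3})`. -/
noncomputable def tmul3 (a b c : Matrix I1 I1 ℂ) :
    Matrix (I1 × I1 × I1) (I1 × I1 × I1) ℂ :=
  Matrix.of fun p q =>
    ((-1 : ℂ) ^ ((((I1.par p.2.1 + I1.par q.2.1) + (I1.par p.2.2 + I1.par q.2.2)) * I1.par q.1
        + (I1.par p.2.2 + I1.par q.2.2) * I1.par q.2.1).val))
      * a p.1 q.1 * b p.2.1 q.2.1 * c p.2.2 q.2.2

/-- `P^{12}` in `End(C^{1|1})^{⊗3}`. -/
noncomputable def P12 : Matrix (I1 × I1 × I1) (I1 × I1 × I1) ℂ :=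
  ∑ r : I1, ∑ s : I1, ((-1 : ℂ) ^ (I1.par s).val) • tmul3 (eps r s) (eps s r) 1

/-- `P^{13}` in `End(C^{1|1})^{⊗3}`. -/
noncomputable def P13 : Matrix (I1 × I1 × I1) (I1 × I1 × I1) ℂ :=
  ∑ r : I1, ∑ s : I1, ((-1 : ℂ) ^ (I1.par s).val) • tmul3 (eps r s) 1 (eps s r)

/-- `P^{23}` in `End(C^{1|1})^{⊗3}`. -/
noncomputable def P23 : Matrix (I1 × I1 × I1) (I1 × I1 × I1) ℂ :=
  ∑ r : I1, ∑ s : I1, ((-1 : ℂ) ^ (I1.par s).val) • tmul3 1 (eps r s) (eps s r)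

/-- `Q^{12}` in `End(C^{1|1})^{⊗3}`. -/
noncomputable def Q12 : Matrix (I1 × I1 × I1) (I1 × I1 × I1) ℂ :=
  ∑ r : I1, ∑ s : I1,
    ((-1 : ℂ) ^ (I1.par s).val) • tmul3 (eps r s) (eps (I1.neg s) (I1.neg r)) 1

/-- `Q^{13}` in `End(C^{1|1})^{⊗3}`. -/
noncomputable def Q13 : Matrix (I1 × I1 × I1) (I1 × I1 × I1) ℂ :=
  ∑ r : I1, ∑ s : I1,
    ((-1 : ℂ) ^ (I1.par s).val) • tmul3 (eps r s) 1 (eps (I1.neg s) (I1.neg r))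

/-- `Q^{23}` in `End(C^{1|1})^{⊗3}`. -/
noncomputable def Q23 : Matrix (I1 × I1 × I1) (I1 × I1 × I1) ℂ :=
  ∑ r : I1, ∑ s : I1,
    ((-1 : ℂ) ^ (I1.par s).val) • tmul3 1 (eps r s) (eps (I1.neg s) (I1.neg r))

def Zeps (i j : I1) : Matrix I1 I1 ℤ := Matrix.single i j 1

def Ztmul3 (a b c : Matrix I1 I1 ℤ) :
    Matrix (I1 × I1 × I1) (I1 × I1 × I1) ℤ :=
  Matrix.of fun p q =>
    ((-1 : ℤ) ^ ((((I1.par p.2.1 + I1.par q.2.1) + (I1.par p.2.2 + I1.par q.2.2)) * I1.par q.1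
        + (I1.par p.2.2 + I1.par q.2.2) * I1.par q.2.1).val))
      * a p.1 q.1 * b p.2.1 q.2.1 * c p.2.2 q.2.2

def ZP12 : Matrix (I1 × I1 × I1) (I1 × I1 × I1) ℤ :=
  ∑ r : I1, ∑ s : I1, ((-1 : ℤ) ^ (I1.par s).val) • Ztmul3 (Zeps r s) (Zeps s r) 1
def ZP13 : Matrix (I1 × I1 × I1) (I1 × I1 × I1) ℤ :=
  ∑ r : I1, ∑ s : I1, ((-1 : ℤ) ^ (I1.par s).val) • Ztmul3 (Zeps r s) 1 (Zeps s r)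
def ZP23 : Matrix (I1 × I1 × I1) (I1 × I1 × I1) ℤ :=
  ∑ r : I1, ∑ s : I1, ((-1 : ℤ) ^ (I1.par s).val) • Ztmul3 1 (Zeps r s) (Zeps s r)
def ZQ12 : Matrix (I1 × I1 × I1) (I1 × I1 × I1) ℤ :=
  ∑ r : I1, ∑ s : I1, ((-1 : ℤ) ^ (I1.par s).val) • Ztmul3 (Zeps r s) (Zeps (I1.neg s) (I1.neg r)) 1
def ZQ13 : Matrix (I1 × I1 × I1) (I1 × I1 × I1) ℤ :=
  ∑ r : I1, ∑ s : I1, ((-1 : ℤ) ^ (I1.par s).val) • Ztmul3 (Zeps r s) 1 (Zeps (I1.neg s) (I1.neg r))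
def ZQ23 : Matrix (I1 × I1 × I1) (I1 × I1 × I1) ℤ :=
  ∑ r : I1, ∑ s : I1, ((-1 : ℤ) ^ (I1.par s).val) • Ztmul3 1 (Zeps r s) (Zeps (I1.neg s) (I1.neg r))

lemma map_P12 : P12 = ZP12.map (Int.cast : ℤ → ℂ) := by
  ext x y
  simp [P12, ZP12, tmul3, Ztmul3, eps, Zeps, Matrix.sum_apply, Matrix.one_apply,
    Matrix.single, apply_ite (Int.cast : ℤ → ℂ)]
lemma map_P13 : P13 = ZP13.map (Int.cast : ℤ → ℂ) := by
  ext x y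
  simp [P13, ZP13, tmul3, Ztmul3, eps, Zeps, Matrix.sum_apply, Matrix.one_apply,
    Matrix.single, apply_ite (Int.cast : ℤ → ℂ)]
lemma map_P23 : P23 = ZP23.map (Int.cast : ℤ → ℂ) := by
  ext x y
  simp [P23, ZP23, tmul3, Ztmul3, eps, Zeps, Matrix.sum_apply, Matrix.one_apply,
    Matrix.single, apply_ite (Int.cast : ℤ → ℂ)]
lemma map_Q12 : Q12 = ZQ12.map (Int.cast : ℤ → ℂ) := by
  ext x y
  simp [Q12, ZQ12, tmul3, Ztmul3, eps, Zeps, Matrix.sum_apply, Matrix.one_apply,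
    Matrix.single, apply_ite (Int.cast : ℤ → ℂ)]
lemma map_Q13 : Q13 = ZQ13.map (Int.cast : ℤ → ℂ) := by
  ext x y
  simp [Q13, ZQ13, tmul3, Ztmul3, eps, Zeps, Matrix.sum_apply, Matrix.one_apply,
    Matrix.single, apply_ite (Int.cast : ℤ → ℂ)]
lemma map_Q23 : Q23 = ZQ23.map (Int.cast : ℤ → ℂ) := by
  ext x y
  simp [Q23, ZQ23, tmul3, Ztmul3, eps, Zeps, Matrix.sum_apply, Matrix.one_apply,
    Matrix.single, apply_ite (Int.cast : ℤ → ℂ)]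

lemma mapc_mul (A B : Matrix (I1 × I1 × I1) (I1 × I1 × I1) ℤ) :
    A.map (Int.cast : ℤ → ℂ) * B.map (Int.cast : ℤ → ℂ) = (A * B).map (Int.cast : ℤ → ℂ) :=
  (Matrix.map_mul (f := Int.castRingHom ℂ)).symm

lemma mapc_neg (A : Matrix (I1 × I1 × I1) (I1 × I1 × I1) ℤ) :
    -(A.map (Int.cast : ℤ → ℂ)) = (-A).map (Int.cast : ℤ → ℂ) := by
  ext x y; simp

lemma mapc_congr {A B : Matrix (I1 × I1 × I1) (I1 × I1 × I1) ℤ} (h : A = B) :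
    A.map (Int.cast : ℤ → ℂ) = B.map (Int.cast : ℤ → ℂ) := by rw [h]

lemma Zrel1 : ZP12 * ZP13 = ZP23 * ZP12 := by decide
lemma Zrel2 : ZP23 * ZP12 = ZP13 * ZP23 := by decide
lemma Zrel3 : ZP12 * ZQ13 = ZQ23 * ZP12 := by decide
lemma Zrel4 : ZQ23 * ZP12 = ZQ13 * ZQ23 := by decide
lemma Zrel5 : ZQ12 * ZQ13 = -(ZP23 * ZQ12) := by decide
lemma Zrel6 : -(ZP23 * ZQ12) = -(ZQ13 * ZP23) := by decide
lemma Zrel7 : ZQ12 * ZP13 = -(ZQ23 * ZQ12) := by decide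
lemma Zrel8 : -(ZQ23 * ZQ12) = -(ZP13 * ZQ23) := by decide

/-- Quadratic relations among the operators `P^{ij}`, `Q^{ij}` in `End(C^{1|1})^{⊗3}`. -/
theorem stmt3 :
    (P12 * P13 = P23 * P12 ∧ P23 * P12 = P13 * P23) ∧
    (P12 * Q13 = Q23 * P12 ∧ Q23 * P12 = Q13 * Q23) ∧
    (Q12 * Q13 = -(P23 * Q12) ∧ -(P23 * Q12) = -(Q13 * P23)) ∧
    (Q12 * P13 = -(Q23 * Q12) ∧ -(Q23 * Q12) = -(P13 * Q23)) := by
  rw [map_P12, map_P13, map_P23, map_Q12, map_Q13, map_Q23]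
  simp only [mapc_mul, mapc_neg]
  exact ⟨⟨mapc_congr Zrel1, mapc_congr Zrel2⟩, ⟨mapc_congr Zrel3, mapc_congr Zrel4⟩,
    ⟨mapc_congr Zrel5, mapc_congr Zrel6⟩, ⟨mapc_congr Zrel7, mapc_congr Zrel8⟩⟩
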